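/- arXiv:2403.00797 — 3 statements merged into one kernel-verified Lean document; each statement's English description precedes it below -/
import Mathlib

section
/- Let $r\in(0,1)$, $q\in[1,\infty)$, $E\subset\mathbb{R}^N$ measurable, and $u\in L^q(E,\mathbb{R}^d)$. Then $\sup_{\varepsilon\in(0,1)}\int_E\frac{1}{\varepsilon^N}\int_{E\cap B_\varepsilon(x)}\frac{|u(x)-u(y)|^q}{|x-y|^{rq}}dy\,dx<\infty$ if and only if $\limsup_{\varepsilon\to 0^+}\int_E\frac{1}{\varepsilon^N}\int_{E\cap B_\varepsilon(x)}\frac{|u(x)-u(y)|^q}{|x-y|^{rq}}dy\,dx<\infty$. -/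
open MeasureTheory Filter
open scoped ENNReal Topology

noncomputable section

lemma aux_rpow_add_le (q : ℝ) (hq : 0 ≤ q) (a b : ℝ≥0∞) :
    (a + b) ^ q ≤ 2 ^ q * (a ^ q + b ^ q) := by
  calc (a + b) ^ q ≤ (2 * (a ⊔ b)) ^ q := by
        apply ENNReal.rpow_le_rpow _ hq
        rcases le_total a b with h | h
        · calc a + b ≤ b + b := by gcongr
            _ = 2 * b := (two_mul b).symm
            _ ≤ 2 * (a ⊔ b) := by gcongr; exact le_max_right a b
        · calc a + b ≤ a + a := by gcongr
            _ = 2 * a := (two_mul a).symm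
            _ ≤ 2 * (a ⊔ b) := by gcongr; exact le_max_left a b
    _ = 2 ^ q * (a ⊔ b) ^ q := ENNReal.mul_rpow_of_nonneg _ _ hq
    _ ≤ 2 ^ q * (a ^ q + b ^ q) := by
        gcongr
        rcases le_total a b with h | h
        · rw [max_eq_right h]; exact le_add_self
        · rw [max_eq_left h]; exact self_le_add_right _ _

/-- For `r ∈ (0,1)`, `q ∈ [1,∞)`, a measurable set `E ⊆ ℝ^N` and
`u ∈ L^q(E, ℝ^d)`, the quantity
`Φ(ε) = ∫_E ε^{-N} ∫_{E ∩ B_ε(x)} ‖u(x)-u(y)‖^q/‖x-y‖^{rq} dy dx`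
is bounded on `(0,1)` if and only if its `limsup` as `ε → 0⁺` is finite. -/
theorem stmt_5 (N d : ℕ) (q r : ℝ) (hq : 1 ≤ q) (hr : r ∈ Set.Ioo (0:ℝ) 1)
    (Eset : Set (EuclideanSpace ℝ (Fin N))) (hEm : MeasurableSet Eset)
    (u : EuclideanSpace ℝ (Fin N) → EuclideanSpace ℝ (Fin d))
    (hu : MemLp u (ENNReal.ofReal q) (volume.restrict Eset))
    (Φ : ℝ → ℝ≥0∞)
    (hΦ : ∀ ε : ℝ, Φ ε = ∫⁻ x in Eset, (ENNReal.ofReal (ε ^ N))⁻¹ *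
        ∫⁻ y in Eset ∩ Metric.ball x ε,
          (‖u x - u y‖₊ : ℝ≥0∞) ^ q / (‖x - y‖₊ : ℝ≥0∞) ^ (r * q)) :
    (∃ C : ℝ≥0∞, C ≠ ⊤ ∧ ∀ ε ∈ Set.Ioo (0:ℝ) 1, Φ ε ≤ C) ↔
      Filter.limsup Φ (𝓝[>] (0:ℝ)) < ⊤ := by
  have hq0 : (0:ℝ) < q := lt_of_lt_of_le one_pos hq
  have hrq0 : 0 ≤ r * q := mul_nonneg hr.1.le hq0.le
  constructor
  · rintro ⟨C, hC, hbound⟩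
    have hev : ∀ᶠ ε in 𝓝[>] (0:ℝ), Φ ε ≤ C := by
      filter_upwards [Ioo_mem_nhdsGT_of_mem (by constructor <;> norm_num :
        (0:ℝ) ∈ Set.Ico (0:ℝ) 1)] with ε hε
      exact hbound ε hε
    exact lt_of_le_of_lt (limsup_le_of_le (by isBoundedDefault) hev) hC.lt_top
  · intro hlim
    set ν := volume.restrict Eset with hν
    obtain ⟨g, hgm, hug⟩ := hu.1
    have hgmeas : Measurable g := hgm.measurable
    -- rewrite Φ using the measurable representative g
    have hΦg : ∀ ε : ℝ, Φ ε = ∫⁻ x in Eset, (ENNReal.ofReal (ε ^ N))⁻¹ *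
        ∫⁻ y in Eset ∩ Metric.ball x ε,
          (‖g x - g y‖₊ : ℝ≥0∞) ^ q / (‖x - y‖₊ : ℝ≥0∞) ^ (r * q) := by
      intro ε
      rw [hΦ ε]
      apply lintegral_congr_ae
      filter_upwards [hug] with x hx
      congr 1
      apply lintegral_congr_ae
      have hug' : u =ᵐ[volume.restrict (Eset ∩ Metric.ball x ε)] g :=
        ae_restrict_of_ae_restrict_of_subset Set.inter_subset_left hug
      filter_upwards [hug'] with y hy
      rw [hx, hy]
    -- finiteness of ∫ ‖g‖^q
    have hM : (∫⁻ x, (‖g x‖₊ : ℝ≥0∞) ^ q ∂ν) < ⊤ := by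
      have h1 : (∫⁻ x, (‖u x‖₊ : ℝ≥0∞) ^ q ∂ν) < ⊤ := by
        have h2 := lintegral_rpow_enorm_lt_top_of_eLpNorm_lt_top (f := u) (μ := ν)
          (p := ENNReal.ofReal q)
          (by simp only [ne_eq, ENNReal.ofReal_eq_zero, not_le]; linarith)
          ENNReal.ofReal_ne_top hu.2
        rwa [ENNReal.toReal_ofReal hq0.le] at h2
      refine lt_of_eq_of_lt ?_ h1
      apply lintegral_congr_ae
      filter_upwards [hug] with x hx
      rw [hx]
    set M := ∫⁻ x, (‖g x‖₊ : ℝ≥0∞) ^ q ∂ν with hMdef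
    set V := volume (Metric.ball (0 : EuclideanSpace ℝ (Fin N)) 1) with hVdef
    have hVlt : V < ⊤ := measure_ball_lt_top
    have hVball : ∀ x : EuclideanSpace ℝ (Fin N), volume (Metric.ball x 1) = V := fun x =>
      Measure.addHaar_ball_center volume x 1
    have hq2top : (2:ℝ≥0∞) ^ q ≠ ⊤ :=
      ENNReal.rpow_ne_top_of_nonneg hq0.le (by norm_num)
    set T := ∫⁻ x, (∫⁻ y in Eset ∩ Metric.ball x 1, (‖g x - g y‖₊ : ℝ≥0∞) ^ q) ∂ν with hTdef
    -- Fubini bound for the mixed term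
    have hTii : (∫⁻ x, (∫⁻ y in Eset ∩ Metric.ball x 1, (‖g y‖₊ : ℝ≥0∞) ^ q) ∂ν)
        ≤ V * M := by
      set F : (EuclideanSpace ℝ (Fin N)) × (EuclideanSpace ℝ (Fin N)) → ℝ≥0∞ :=
        fun p => ({p : (EuclideanSpace ℝ (Fin N)) × (EuclideanSpace ℝ (Fin N)) |
          dist p.2 p.1 < 1}).indicator (fun p => (‖g p.2‖₊ : ℝ≥0∞) ^ q) p with hF
      have hFm : Measurable F := by
        apply Measurable.indicator
        · exact ENNReal.continuous_rpow_const.measurable.comp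
            ((hgmeas.comp measurable_snd).enorm)
        · exact (isOpen_lt (continuous_snd.dist continuous_fst) continuous_const).measurableSet
      have hrw : ∀ x : EuclideanSpace ℝ (Fin N),
          (∫⁻ y in Eset ∩ Metric.ball x 1, (‖g y‖₊ : ℝ≥0∞) ^ q)
            = ∫⁻ y, F (x, y) ∂ν := by
        intro x
        rw [Set.inter_comm, ← Measure.restrict_restrict measurableSet_ball, ← hν,
          ← lintegral_indicator measurableSet_ball]
        apply lintegral_congr
        intro y
        simp [hF, Set.indicator, Metric.mem_ball]
      calc (∫⁻ x, (∫⁻ y in Eset ∩ Metric.ball x 1, (‖g y‖₊ : ℝ≥0∞) ^ q) ∂ν)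
          = ∫⁻ x, ∫⁻ y, F (x, y) ∂ν ∂ν := by
            apply lintegral_congr; intro x; exact hrw x
        _ = ∫⁻ y, ∫⁻ x, F (x, y) ∂ν ∂ν :=
            lintegral_lintegral_swap hFm.aemeasurable
        _ ≤ ∫⁻ y, (‖g y‖₊ : ℝ≥0∞) ^ q * V ∂ν := by
            apply lintegral_mono
            intro y
            have : ∀ x, F (x, y) = (Metric.ball y 1).indicator
                (fun _ => (‖g y‖₊ : ℝ≥0∞) ^ q) x := by
              intro x
              simp [hF, Set.indicator, Metric.mem_ball, dist_comm]
            calc (∫⁻ x, F (x, y) ∂ν)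
                = ∫⁻ x, (Metric.ball y 1).indicator (fun _ => (‖g y‖₊ : ℝ≥0∞) ^ q) x ∂ν := by
                  apply lintegral_congr; intro x; exact this x
              _ = (‖g y‖₊ : ℝ≥0∞) ^ q * ν (Metric.ball y 1) :=
                  lintegral_indicator_const measurableSet_ball _
              _ ≤ (‖g y‖₊ : ℝ≥0∞) ^ q * V := by
                  gcongr
                  calc ν (Metric.ball y 1) ≤ volume (Metric.ball y 1) :=
                        Measure.restrict_le_self _
                    _ = V := hVball y
        _ = M * V := lintegral_mul_const' _ _ hVlt.ne
        _ = V * M := mul_comm _ _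
    -- finiteness of T
    have hTlt : T < ⊤ := by
      have hpoint : ∀ x, (∫⁻ y in Eset ∩ Metric.ball x 1, (‖g x - g y‖₊ : ℝ≥0∞) ^ q)
          ≤ 2 ^ q * ((‖g x‖₊ : ℝ≥0∞) ^ q * V)
            + 2 ^ q * (∫⁻ y in Eset ∩ Metric.ball x 1, (‖g y‖₊ : ℝ≥0∞) ^ q) := by
        intro x
        calc (∫⁻ y in Eset ∩ Metric.ball x 1, (‖g x - g y‖₊ : ℝ≥0∞) ^ q)
            ≤ ∫⁻ y in Eset ∩ Metric.ball x 1,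
                (2 ^ q * ((‖g x‖₊ : ℝ≥0∞) ^ q) + 2 ^ q * ((‖g y‖₊ : ℝ≥0∞) ^ q)) := by
              apply lintegral_mono
              intro y
              have h1 : (‖g x - g y‖₊ : ℝ≥0∞) ≤ (‖g x‖₊ : ℝ≥0∞) + (‖g y‖₊ : ℝ≥0∞) := by
                exact_mod_cast nnnorm_sub_le _ _
              calc (‖g x - g y‖₊ : ℝ≥0∞) ^ q
                  ≤ ((‖g x‖₊ : ℝ≥0∞) + (‖g y‖₊ : ℝ≥0∞)) ^ q :=
                    ENNReal.rpow_le_rpow h1 hq0.le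
                _ ≤ 2 ^ q * ((‖g x‖₊ : ℝ≥0∞) ^ q + (‖g y‖₊ : ℝ≥0∞) ^ q) :=
                    aux_rpow_add_le q hq0.le _ _
                _ = 2 ^ q * ((‖g x‖₊ : ℝ≥0∞) ^ q) + 2 ^ q * ((‖g y‖₊ : ℝ≥0∞) ^ q) :=
                    mul_add _ _ _
          _ = (∫⁻ _ in Eset ∩ Metric.ball x 1, 2 ^ q * ((‖g x‖₊ : ℝ≥0∞) ^ q))
                + ∫⁻ y in Eset ∩ Metric.ball x 1, 2 ^ q * ((‖g y‖₊ : ℝ≥0∞) ^ q) :=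
              lintegral_add_left measurable_const _
          _ ≤ 2 ^ q * ((‖g x‖₊ : ℝ≥0∞) ^ q * V)
                + 2 ^ q * (∫⁻ y in Eset ∩ Metric.ball x 1, (‖g y‖₊ : ℝ≥0∞) ^ q) := by
              gcongr ?_ + ?_
              · rw [setLIntegral_const, mul_assoc]
                gcongr
                exact le_trans (measure_mono Set.inter_subset_right) (hVball x).le
              · rw [lintegral_const_mul' _ _ hq2top]
      have hmeasA : Measurable fun x => 2 ^ q * ((‖g x‖₊ : ℝ≥0∞) ^ q * V) :=
        measurable_const.mul
          ((ENNReal.continuous_rpow_const.measurable.comp hgmeas.enorm).mul_const V)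
      calc T ≤ ∫⁻ x, (2 ^ q * ((‖g x‖₊ : ℝ≥0∞) ^ q * V)
            + 2 ^ q * (∫⁻ y in Eset ∩ Metric.ball x 1, (‖g y‖₊ : ℝ≥0∞) ^ q)) ∂ν :=
            lintegral_mono hpoint
        _ = (∫⁻ x, 2 ^ q * ((‖g x‖₊ : ℝ≥0∞) ^ q * V) ∂ν)
            + ∫⁻ x, 2 ^ q * (∫⁻ y in Eset ∩ Metric.ball x 1, (‖g y‖₊ : ℝ≥0∞) ^ q) ∂ν :=
            lintegral_add_left hmeasA _
        _ ≤ 2 ^ q * (M * V) + 2 ^ q * (V * M) := by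
            gcongr ?_ + ?_
            · rw [lintegral_const_mul' _ _ hq2top, lintegral_mul_const' _ _ hVlt.ne]
            · rw [lintegral_const_mul' _ _ hq2top]
              exact mul_le_mul_right hTii _
        _ < ⊤ := by
            apply ENNReal.add_lt_top.mpr
            constructor
            · exact ENNReal.mul_lt_top hq2top.lt_top (ENNReal.mul_lt_top hM hVlt).ne.lt_top
            · exact ENNReal.mul_lt_top hq2top.lt_top (ENNReal.mul_lt_top hVlt hM).ne.lt_top
    -- extract a small threshold from the limsup bound
    set C := limsup Φ (𝓝[>] (0:ℝ)) with hCdef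
    have hev : ∀ᶠ ε in 𝓝[>] (0:ℝ), Φ ε < C + 1 :=
      eventually_lt_of_limsup_lt (ENNReal.lt_add_right hlim.ne one_ne_zero)
    obtain ⟨δ, hδ0, hδsub⟩ := mem_nhdsGT_iff_exists_Ioo_subset.mp hev
    have hδ0' : (0:ℝ) < δ := hδ0
    set ε₁ := min δ 1 / 2 with hε₁def
    have hε₁0 : 0 < ε₁ := by
      have : (0:ℝ) < min δ 1 := lt_min hδ0' one_pos
      positivity
    have hε₁δ : ε₁ < δ := by
      have h1 := min_le_left δ 1
      rw [hε₁def]; linarith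
    have hε₁1 : ε₁ < 1 := by
      have h1 := min_le_right δ 1
      rw [hε₁def]; linarith
    have hΦε₁ : Φ ε₁ ≤ C + 1 := (hδsub ⟨hε₁0, hε₁δ⟩).le
    set a := ENNReal.ofReal (ε₁ ^ N) with hadef
    have ha0 : a ≠ 0 := by
      simp only [hadef, ne_eq, ENNReal.ofReal_eq_zero, not_le]
      positivity
    set b := (ENNReal.ofReal (ε₁ ^ (r * q)))⁻¹ with hbdef
    have hbtop : b ≠ ⊤ := by
      simp only [hbdef, ne_eq, ENNReal.inv_eq_top, ENNReal.ofReal_eq_zero, not_le]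
      exact Real.rpow_pos_of_pos hε₁0 _
    have hatop : a⁻¹ ≠ ⊤ := by
      simp only [ne_eq, ENNReal.inv_eq_top]
      exact ha0
    refine ⟨(C + 1) + (a⁻¹ * b) * T, ?_, ?_⟩
    · apply ENNReal.add_ne_top.mpr
      constructor
      · exact ENNReal.add_ne_top.mpr ⟨hlim.ne, ENNReal.one_ne_top⟩
      · exact ENNReal.mul_ne_top (ENNReal.mul_ne_top hatop hbtop) hTlt.ne
    · rintro ε ⟨hε0, hε1⟩
      by_cases hcase : ε < δ
      · exact le_trans (hδsub ⟨hε0, hcase⟩).le le_self_add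
      · have hε₁ε : ε₁ ≤ ε := le_trans hε₁δ.le (not_lt.mp hcase)
        -- main estimate for ε ∈ [ε₁, 1)
        have key : Φ ε ≤ Φ ε₁ + (a⁻¹ * b) * T := by
          rw [hΦg ε, hΦg ε₁]
          have hIle : ∀ x : EuclideanSpace ℝ (Fin N), (ENNReal.ofReal (ε ^ N))⁻¹ *
              (∫⁻ y in Eset ∩ Metric.ball x ε,
                (‖g x - g y‖₊ : ℝ≥0∞) ^ q / (‖x - y‖₊ : ℝ≥0∞) ^ (r * q))
              ≤ a⁻¹ * (∫⁻ y in Eset ∩ Metric.ball x ε₁,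
                  (‖g x - g y‖₊ : ℝ≥0∞) ^ q / (‖x - y‖₊ : ℝ≥0∞) ^ (r * q))
                + (a⁻¹ * b) * (∫⁻ y in Eset ∩ Metric.ball x 1, (‖g x - g y‖₊ : ℝ≥0∞) ^ q) := by
            intro x
            have hinv : (ENNReal.ofReal (ε ^ N))⁻¹ ≤ a⁻¹ := by
              apply ENNReal.inv_le_inv.mpr
              exact ENNReal.ofReal_le_ofReal (pow_le_pow_left₀ hε₁0.le hε₁ε N)
            have hsplit : (∫⁻ y in Eset ∩ Metric.ball x ε,
                (‖g x - g y‖₊ : ℝ≥0∞) ^ q / (‖x - y‖₊ : ℝ≥0∞) ^ (r * q))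
                ≤ (∫⁻ y in Eset ∩ Metric.ball x ε₁,
                    (‖g x - g y‖₊ : ℝ≥0∞) ^ q / (‖x - y‖₊ : ℝ≥0∞) ^ (r * q))
                  + b * (∫⁻ y in Eset ∩ Metric.ball x 1, (‖g x - g y‖₊ : ℝ≥0∞) ^ q) := by
              have hsub : Eset ∩ Metric.ball x ε ⊆
                  (Eset ∩ Metric.ball x ε₁) ∪ (Eset ∩ (Metric.ball x ε \ Metric.ball x ε₁)) := by
                rintro y ⟨hyE, hyb⟩
                by_cases h : y ∈ Metric.ball x ε₁
                · exact Or.inl ⟨hyE, h⟩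
                · exact Or.inr ⟨hyE, hyb, h⟩
              have h2 : (∫⁻ y in Eset ∩ (Metric.ball x ε \ Metric.ball x ε₁),
                  (‖g x - g y‖₊ : ℝ≥0∞) ^ q / (‖x - y‖₊ : ℝ≥0∞) ^ (r * q))
                  ≤ b * (∫⁻ y in Eset ∩ Metric.ball x 1, (‖g x - g y‖₊ : ℝ≥0∞) ^ q) := by
                calc (∫⁻ y in Eset ∩ (Metric.ball x ε \ Metric.ball x ε₁),
                    (‖g x - g y‖₊ : ℝ≥0∞) ^ q / (‖x - y‖₊ : ℝ≥0∞) ^ (r * q))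
                    ≤ ∫⁻ y in Eset ∩ (Metric.ball x ε \ Metric.ball x ε₁),
                        b * (‖g x - g y‖₊ : ℝ≥0∞) ^ q := by
                      apply setLIntegral_mono'
                        (hEm.inter (measurableSet_ball.diff measurableSet_ball))
                      intro y hy
                      have hyd : ε₁ ≤ dist y x := not_lt.mp (by
                        simpa [Metric.mem_ball] using hy.2.2)
                      have hnorm : ε₁ ≤ ‖x - y‖ := by
                        rw [← dist_eq_norm, dist_comm]
                        exact hyd
                      have hden : ENNReal.ofReal (ε₁ ^ (r * q))
                          ≤ (‖x - y‖₊ : ℝ≥0∞) ^ (r * q) := by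
                        rw [← enorm_eq_nnnorm, ← ofReal_norm_eq_enorm,
                          ENNReal.ofReal_rpow_of_pos (lt_of_lt_of_le hε₁0 hnorm)]
                        exact ENNReal.ofReal_le_ofReal
                          (Real.rpow_le_rpow hε₁0.le hnorm hrq0)
                      calc (‖g x - g y‖₊ : ℝ≥0∞) ^ q / (‖x - y‖₊ : ℝ≥0∞) ^ (r * q)
                          = (‖g x - g y‖₊ : ℝ≥0∞) ^ q * ((‖x - y‖₊ : ℝ≥0∞) ^ (r * q))⁻¹ :=
                            div_eq_mul_inv _ _
                        _ ≤ (‖g x - g y‖₊ : ℝ≥0∞) ^ q * b := by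
                            gcongr
                            exact ENNReal.inv_le_inv.mpr hden
                        _ = b * (‖g x - g y‖₊ : ℝ≥0∞) ^ q := mul_comm _ _
                  _ = b * ∫⁻ y in Eset ∩ (Metric.ball x ε \ Metric.ball x ε₁),
                        (‖g x - g y‖₊ : ℝ≥0∞) ^ q := lintegral_const_mul' _ _ hbtop
                  _ ≤ b * (∫⁻ y in Eset ∩ Metric.ball x 1, (‖g x - g y‖₊ : ℝ≥0∞) ^ q) := by
                      gcongr
                      rintro y ⟨hyb, -⟩
                      exact Metric.ball_subset_ball hε1.le hyb
              calc (∫⁻ y in Eset ∩ Metric.ball x ε,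
                  (‖g x - g y‖₊ : ℝ≥0∞) ^ q / (‖x - y‖₊ : ℝ≥0∞) ^ (r * q))
                  ≤ ∫⁻ y in (Eset ∩ Metric.ball x ε₁) ∪
                      (Eset ∩ (Metric.ball x ε \ Metric.ball x ε₁)),
                      (‖g x - g y‖₊ : ℝ≥0∞) ^ q / (‖x - y‖₊ : ℝ≥0∞) ^ (r * q) :=
                    lintegral_mono_set hsub
                _ ≤ _ + _ := lintegral_union_le _ _ _
                _ ≤ _ := by gcongr
            calc (ENNReal.ofReal (ε ^ N))⁻¹ *
                (∫⁻ y in Eset ∩ Metric.ball x ε,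
                  (‖g x - g y‖₊ : ℝ≥0∞) ^ q / (‖x - y‖₊ : ℝ≥0∞) ^ (r * q))
                ≤ a⁻¹ * ((∫⁻ y in Eset ∩ Metric.ball x ε₁,
                    (‖g x - g y‖₊ : ℝ≥0∞) ^ q / (‖x - y‖₊ : ℝ≥0∞) ^ (r * q))
                  + b * (∫⁻ y in Eset ∩ Metric.ball x 1, (‖g x - g y‖₊ : ℝ≥0∞) ^ q)) := by
                  gcongr
              _ = _ := by rw [mul_add, mul_assoc]
          -- measurability of the first summand
          have hI₁m : Measurable fun x : EuclideanSpace ℝ (Fin N) =>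
              a⁻¹ * ∫⁻ y in Eset ∩ Metric.ball x ε₁,
                (‖g x - g y‖₊ : ℝ≥0∞) ^ q / (‖x - y‖₊ : ℝ≥0∞) ^ (r * q) := by
            apply Measurable.const_mul
            set G : (EuclideanSpace ℝ (Fin N)) × (EuclideanSpace ℝ (Fin N)) → ℝ≥0∞ :=
              fun p => ({p : (EuclideanSpace ℝ (Fin N)) × (EuclideanSpace ℝ (Fin N)) |
                dist p.2 p.1 < ε₁}).indicator
                (fun p => (‖g p.1 - g p.2‖₊ : ℝ≥0∞) ^ q / (‖p.1 - p.2‖₊ : ℝ≥0∞) ^ (r * q)) p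
              with hG
            have hGm : Measurable G := by
              apply Measurable.indicator
              · simp only [div_eq_mul_inv]
                exact (ENNReal.continuous_rpow_const.measurable.comp
                    (((hgmeas.comp measurable_fst).sub (hgmeas.comp measurable_snd)).enorm)).mul
                  (ENNReal.continuous_rpow_const.measurable.comp
                    ((measurable_fst.sub measurable_snd).enorm)).inv
              · exact (isOpen_lt (continuous_snd.dist continuous_fst)
                  continuous_const).measurableSet
            have hrw : (fun x : EuclideanSpace ℝ (Fin N) =>
                ∫⁻ y in Eset ∩ Metric.ball x ε₁,
                  (‖g x - g y‖₊ : ℝ≥0∞) ^ q / (‖x - y‖₊ : ℝ≥0∞) ^ (r * q))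
                = fun x => ∫⁻ y, G (x, y) ∂ν := by
              funext x
              rw [Set.inter_comm, ← Measure.restrict_restrict measurableSet_ball, ← hν,
                ← lintegral_indicator measurableSet_ball]
              apply lintegral_congr
              intro y
              simp [hG, Set.indicator, Metric.mem_ball]
            rw [hrw]
            exact Measurable.lintegral_prod_right (f := fun x y => G (x, y)) hGm
          calc (∫⁻ x in Eset, (ENNReal.ofReal (ε ^ N))⁻¹ *
              ∫⁻ y in Eset ∩ Metric.ball x ε,
                (‖g x - g y‖₊ : ℝ≥0∞) ^ q / (‖x - y‖₊ : ℝ≥0∞) ^ (r * q))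
              ≤ ∫⁻ x in Eset, (a⁻¹ * (∫⁻ y in Eset ∩ Metric.ball x ε₁,
                  (‖g x - g y‖₊ : ℝ≥0∞) ^ q / (‖x - y‖₊ : ℝ≥0∞) ^ (r * q))
                + (a⁻¹ * b) * (∫⁻ y in Eset ∩ Metric.ball x 1,
                    (‖g x - g y‖₊ : ℝ≥0∞) ^ q)) := lintegral_mono hIle
            _ = (∫⁻ x in Eset, a⁻¹ * (∫⁻ y in Eset ∩ Metric.ball x ε₁,
                  (‖g x - g y‖₊ : ℝ≥0∞) ^ q / (‖x - y‖₊ : ℝ≥0∞) ^ (r * q)))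
                + ∫⁻ x in Eset, (a⁻¹ * b) * (∫⁻ y in Eset ∩ Metric.ball x 1,
                    (‖g x - g y‖₊ : ℝ≥0∞) ^ q) := lintegral_add_left hI₁m _
            _ ≤ (∫⁻ x in Eset, a⁻¹ * (∫⁻ y in Eset ∩ Metric.ball x ε₁,
                  (‖g x - g y‖₊ : ℝ≥0∞) ^ q / (‖x - y‖₊ : ℝ≥0∞) ^ (r * q)))
                + (a⁻¹ * b) * T := by
                gcongr
                rw [lintegral_const_mul' _ _ (ENNReal.mul_ne_top hatop hbtop)]
        calc Φ ε ≤ Φ ε₁ + (a⁻¹ * b) * T := key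
          _ ≤ (C + 1) + (a⁻¹ * b) * T := by gcongr
end
end

section
/- Let $r\in(0,1)$, $q\in[1,\infty)$. Then $u\in B^r_{q,\infty}(\mathbb{R}^N,\mathbb{R}^d)$ if and only if $u\in L^q(\mathbb{R}^N,\mathbb{R}^d)$ and $\sup_{\varepsilon\in(0,1)}\int_{\mathbb{R}^N}\frac{1}{\varepsilon^N}\int_{B_\varepsilon(x)}\frac{|u(x)-u(y)|^q}{|x-y|^{rq}}dy\,dx<\infty$. -/
open MeasureTheory Filter Metric
open scoped ENNReal NNReal Topology

noncomputable section

namespace Stmt8Aux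

lemma rpow_add_le (a b : ℝ≥0∞) {q : ℝ} (hq : 0 ≤ q) :
    (a + b) ^ q ≤ 2 ^ q * (a ^ q + b ^ q) := by
  calc (a + b) ^ q ≤ (2 * max a b) ^ q := by
        apply ENNReal.rpow_le_rpow _ hq
        rw [two_mul]
        exact add_le_add (le_max_left a b) (le_max_right a b)
    _ = 2 ^ q * max a b ^ q := ENNReal.mul_rpow_of_nonneg _ _ hq
    _ ≤ 2 ^ q * (a ^ q + b ^ q) := by
        gcongr
        rcases max_cases a b with ⟨h, _⟩ | ⟨h, _⟩ <;> rw [h]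
        · exact le_self_add
        · exact le_add_self

variable {N d : ℕ}
local notation "E" => EuclideanSpace ℝ (Fin N)
local notation "V" => EuclideanSpace ℝ (Fin d)

lemma shift_ball (x : E) {ε : ℝ} (f : E → ℝ≥0∞) :
    ∫⁻ y in ball x ε, f y = ∫⁻ w in ball (0 : E) ε, f (x + w) := by
  have h := ((measurePreserving_add_left volume x).setLIntegral_comp_preimage_emb
    (MeasurableEquiv.addLeft x).measurableEmbedding f (ball x ε)).symm
  have hp : (fun w : E => x + w) ⁻¹' ball x ε = ball (0 : E) ε := by
    ext w
    simp [Metric.mem_ball, dist_eq_norm, add_sub_cancel_left]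
  simpa [hp] using h

lemma reflect_ball (a : E) {s : Set E} (hs : (fun w : E => a - w) ⁻¹' s = s)
    (f : E → ℝ≥0∞) :
    ∫⁻ w in s, f (a - w) = ∫⁻ v in s, f v := by
  have h := (Measure.measurePreserving_sub_left volume a).setLIntegral_comp_preimage_emb
    (MeasurableEquiv.subLeft a).measurableEmbedding f s
  simpa [hs] using h

lemma vol_ball (hN : 0 < N) (x : E) {ε : ℝ} (hε : 0 ≤ ε) :
    volume (ball x ε) = ENNReal.ofReal (ε ^ N) * volume (ball (0 : E) 1) := by
  haveI : Nonempty (Fin N) := ⟨⟨0, hN⟩⟩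
  rw [Measure.addHaar_ball volume x hε, finrank_euclideanSpace_fin]

lemma meas_num {u : E → V} (hu : Measurable u) {φ ψ : E × E → E}
    (hφ : Measurable φ) (hψ : Measurable ψ) (q : ℝ) :
    Measurable fun p : E × E => (‖u (φ p) - u (ψ p)‖₊ : ℝ≥0∞) ^ q :=
  (ENNReal.continuous_rpow_const.measurable).comp
    (((hu.comp hφ).sub (hu.comp hψ)).nnnorm.coe_nnreal_ennreal)

lemma meas_den (s : ℝ) :
    Measurable fun p : E × E => (‖p.2‖₊ : ℝ≥0∞) ^ s :=
  (ENNReal.continuous_rpow_const.measurable).comp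
    (measurable_snd.nnnorm.coe_nnreal_ennreal)

/-- Rewriting the inner ball integral as an integral over `ball 0 ε`. -/
lemma inner_eq {u : E → V} (q s : ℝ) (x : E) (ε : ℝ) :
    (∫⁻ y in ball x ε, (‖u x - u y‖₊ : ℝ≥0∞) ^ q / (‖x - y‖₊ : ℝ≥0∞) ^ s)
      = ∫⁻ w in ball (0 : E) ε, (‖u x - u (x + w)‖₊ : ℝ≥0∞) ^ q / (‖w‖₊ : ℝ≥0∞) ^ s := by
  rw [shift_ball x]
  apply setLIntegral_congr_fun measurableSet_ball
  intro w _
  dsimp only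
  have : x - (x + w) = -w := by abel
  rw [this, nnnorm_neg]

/-- Forward direction core estimate. -/
lemma fwd_aux (hN : 0 < N) {q r : ℝ} (hq : 1 ≤ q) (hr0 : 0 < r)
    {u : E → V} (hu : Measurable u) (C : ℝ≥0∞)
    (hb : ∀ h : E, h ≠ 0 →
      (∫⁻ x, (‖u (x + h) - u x‖₊ : ℝ≥0∞) ^ q / (‖h‖₊ : ℝ≥0∞) ^ (r * q)) ≤ C)
    {ε : ℝ} (hε : 0 < ε) :
    (∫⁻ x, (ENNReal.ofReal (ε ^ N))⁻¹ *
        ∫⁻ y in ball x ε, (‖u x - u y‖₊ : ℝ≥0∞) ^ q / (‖x - y‖₊ : ℝ≥0∞) ^ (r * q))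
      ≤ C * volume (ball (0 : E) 1) := by
  have hq0 : (0:ℝ) < q := lt_of_lt_of_le one_pos hq
  have hrq : (0:ℝ) < r * q := mul_pos hr0 hq0
  have hb' : ∀ h : E,
      (∫⁻ x, (‖u (x + h) - u x‖₊ : ℝ≥0∞) ^ q / (‖h‖₊ : ℝ≥0∞) ^ (r * q)) ≤ C := by
    intro h
    by_cases h0 : h = 0
    · subst h0
      have : ∀ x : E, (‖u (x + 0) - u x‖₊ : ℝ≥0∞) ^ q / (‖(0:E)‖₊ : ℝ≥0∞) ^ (r * q) = 0 := by
        intro x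
        simp [add_zero, ENNReal.zero_rpow_of_pos hq0, ENNReal.zero_rpow_of_pos hrq]
      simp only [this, lintegral_zero]
      exact zero_le
    · exact hb h h0
  set c : ℝ≥0∞ := ENNReal.ofReal (ε ^ N) with hc
  have hc0 : c ≠ 0 := by
    simp only [hc, ne_eq, ENNReal.ofReal_eq_zero, not_le]
    positivity
  have hcT : c ≠ ⊤ := ENNReal.ofReal_ne_top
  rw [lintegral_const_mul' _ _ (ENNReal.inv_ne_top.mpr hc0)]
  simp only [inner_eq (u := u) q (r * q)]
  rw [lintegral_lintegral_swap]
  · have hb2 : ∀ w : E,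
        (∫⁻ x, (‖u x - u (x + w)‖₊ : ℝ≥0∞) ^ q / (‖w‖₊ : ℝ≥0∞) ^ (r * q)) ≤ C := by
      intro w
      refine le_trans (le_of_eq ?_) (hb' w)
      refine lintegral_congr fun x => ?_
      rw [show (‖u x - u (x + w)‖₊ : NNReal) = ‖u (x + w) - u x‖₊ by rw [← neg_sub, nnnorm_neg]]
    calc c⁻¹ * ∫⁻ w in ball (0:E) ε,
            ∫⁻ x, (‖u x - u (x + w)‖₊ : ℝ≥0∞) ^ q / (‖w‖₊ : ℝ≥0∞) ^ (r * q)
        ≤ c⁻¹ * ∫⁻ _ in ball (0:E) ε, C :=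
          mul_le_mul_right (setLIntegral_mono' measurableSet_ball fun w _ => hb2 w) _
      _ = c⁻¹ * (C * (c * volume (ball (0:E) 1))) := by
          rw [setLIntegral_const, vol_ball hN _ hε.le]
      _ = (c⁻¹ * c) * (C * volume (ball (0:E) 1)) := by ring
      _ = C * volume (ball (0:E) 1) := by rw [ENNReal.inv_mul_cancel hc0 hcT, one_mul]
  · exact ((meas_num hu measurable_fst (measurable_fst.add measurable_snd) q).div
      (meas_den (r*q))).aemeasurable

set_option maxHeartbeats 1000000 in
/-- Backward direction core estimate. -/
lemma bwd_aux (hN : 0 < N) {q r : ℝ} (hq : 1 ≤ q) (hr0 : 0 < r)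
    {u : E → V} (hu : Measurable u)
    (hA : (∫⁻ x, (‖u x‖₊ : ℝ≥0∞) ^ q) ≠ ⊤) (C : ℝ≥0∞) (hC : C ≠ ⊤)
    (hb : ∀ ε ∈ Set.Ioo (0:ℝ) 1,
      (∫⁻ x, (ENNReal.ofReal (ε ^ N))⁻¹ *
        ∫⁻ y in ball x ε, (‖u x - u y‖₊ : ℝ≥0∞) ^ q / (‖x - y‖₊ : ℝ≥0∞) ^ (r * q)) ≤ C) :
    ∃ C' : ℝ≥0∞, C' ≠ ⊤ ∧ ∀ h : E, h ≠ 0 →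
      (∫⁻ x, (‖u (x + h) - u x‖₊ : ℝ≥0∞) ^ q / (‖h‖₊ : ℝ≥0∞) ^ (r * q)) ≤ C' := by
  have hq0 : (0:ℝ) < q := lt_of_lt_of_le one_pos hq
  have hrq : (0:ℝ) < r * q := mul_pos hr0 hq0
  set A := ∫⁻ x, (‖u x‖₊ : ℝ≥0∞) ^ q with hAdef
  set B := volume (ball (0:E) 1) with hBdef
  have hB0 : B ≠ 0 := (measure_ball_pos _ _ one_pos).ne'
  have h2T : (2:ℝ≥0∞) ^ (q+1) ≠ ⊤ :=
    ENNReal.rpow_ne_top_of_nonneg (by linarith) ENNReal.ofNat_ne_top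
  have h2qT : (2:ℝ≥0∞) ^ q ≠ ⊤ :=
    ENNReal.rpow_ne_top_of_nonneg hq0.le ENNReal.ofNat_ne_top
  refine ⟨2^(q+1) * A + 2^(q+1) * ENNReal.ofReal ((4:ℝ)^N) * B⁻¹ * C, ?_, ?_⟩
  · exact ENNReal.add_ne_top.mpr ⟨ENNReal.mul_ne_top h2T hA,
      ENNReal.mul_ne_top (ENNReal.mul_ne_top (ENNReal.mul_ne_top h2T ENNReal.ofReal_ne_top)
        (ENNReal.inv_ne_top.mpr hB0)) hC⟩
  intro h hh0
  have hε0 : (0:ℝ) < ‖h‖ := norm_pos_iff.mpr hh0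
  set D : ℝ≥0∞ := (‖h‖₊ : ℝ≥0∞) ^ (r * q) with hDdef
  have hnn0 : (‖h‖₊ : ℝ≥0∞) ≠ 0 := by
    simp only [ne_eq, ENNReal.coe_eq_zero, nnnorm_eq_zero]
    exact hh0
  have hD0 : D ≠ 0 := by
    simp only [hDdef, ne_eq, ENNReal.rpow_eq_zero_iff, not_or, not_and, not_lt]
    exact ⟨fun hc => absurd hc hnn0, fun hc => absurd hc ENNReal.coe_ne_top⟩
  have hDT : D ≠ ⊤ := ENNReal.rpow_ne_top_of_nonneg hrq.le ENNReal.coe_ne_top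
  -- triangle bound used in both cases
  have htri : ∀ (a b c : V), (‖a - c‖₊ : ℝ≥0∞) ≤ (‖a - b‖₊ : ℝ≥0∞) + (‖b - c‖₊ : ℝ≥0∞) := by
    intro a b c
    have : a - c = (a - b) + (b - c) := by abel
    rw [this]
    exact_mod_cast nnnorm_add_le _ _
  by_cases hbig : 1 ≤ ‖h‖
  · -- large shift
    have hD1 : (1:ℝ≥0∞) ≤ D := by
      have h1 : (1:ℝ≥0∞) ≤ (‖h‖₊ : ℝ≥0∞) := by
        rw [show (1:ℝ≥0∞) = ((1:ℝ≥0):ℝ≥0∞) by norm_num, ENNReal.coe_le_coe]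
        rw [← NNReal.coe_le_coe]
        simpa using hbig
      calc (1:ℝ≥0∞) = 1 ^ (r*q) := (ENNReal.one_rpow _).symm
        _ ≤ (‖h‖₊ : ℝ≥0∞) ^ (r*q) := ENNReal.rpow_le_rpow h1 hrq.le
    calc (∫⁻ x, (‖u (x + h) - u x‖₊ : ℝ≥0∞) ^ q / D)
        ≤ ∫⁻ x, (‖u (x + h) - u x‖₊ : ℝ≥0∞) ^ q := by
          apply lintegral_mono; intro x
          exact ENNReal.div_le_of_le_mul (le_mul_of_one_le_right' hD1)
      _ ≤ ∫⁻ x, 2^q * ((‖u (x + h)‖₊ : ℝ≥0∞) ^ q + (‖u x‖₊ : ℝ≥0∞) ^ q) := by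
          apply lintegral_mono; intro x
          refine le_trans ?_ (rpow_add_le _ _ hq0.le)
          apply ENNReal.rpow_le_rpow _ hq0.le
          have := htri (u (x+h)) 0 (u x)
          simpa using this
      _ = 2^q * ((∫⁻ x, (‖u (x + h)‖₊ : ℝ≥0∞) ^ q) + ∫⁻ x, (‖u x‖₊ : ℝ≥0∞) ^ q) := by
          rw [lintegral_const_mul' _ _ h2qT, lintegral_add_left]
          exact (ENNReal.continuous_rpow_const.measurable).comp
            ((hu.comp (measurable_add_const h)).nnnorm.coe_nnreal_ennreal)
      _ = 2^q * (A + A) := by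
          rw [lintegral_add_right_eq_self (fun x => (‖u x‖₊ : ℝ≥0∞) ^ q) h]
      _ = 2^(q+1) * A := by
          rw [ENNReal.rpow_add q 1 two_ne_zero ENNReal.ofNat_ne_top, ENNReal.rpow_one]; ring
      _ ≤ _ := le_self_add
  · -- small shift
    push_neg at hbig
    set ε : ℝ := ‖h‖ with hεdef
    set m : E := (2⁻¹:ℝ) • h with hmdef
    have hm : ‖m‖ = 2⁻¹ * ε := by
      rw [hmdef, norm_smul]
      norm_num
      exact hεdef.symm
    have hmm : m + m = h := by
      rw [hmdef, ← add_smul]; norm_num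
    set S : Set E := ball m (ε/4) with hSdef
    have hS_sub : S ⊆ ball (0:E) ε := by
      intro w hw
      rw [hSdef, mem_ball, dist_eq_norm] at hw
      rw [mem_ball, dist_eq_norm, sub_zero]
      calc ‖w‖ = ‖(w - m) + m‖ := by rw [sub_add_cancel]
        _ ≤ ‖w - m‖ + ‖m‖ := norm_add_le _ _
        _ < ε/4 + 2⁻¹ * ε := by rw [hm] at *; linarith
        _ ≤ ε := by linarith
    have hS_norm : ∀ w ∈ S, ‖w‖ ≤ ε := by
      intro w hw
      have := hS_sub hw
      rw [mem_ball, dist_eq_norm, sub_zero] at this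
      exact this.le
    have hS_refl : (fun w : E => h - w) ⁻¹' S = S := by
      ext w
      simp only [hSdef, Set.mem_preimage, mem_ball, dist_eq_norm]
      have heq : h - w - m = m - w := by rw [← hmm]; abel
      rw [heq, norm_sub_rev]
    set b := volume S with hbdef
    have hbv : b = ENNReal.ofReal ((ε/4)^N) * B := vol_ball hN m (by positivity)
    have hb0 : b ≠ 0 := (measure_ball_pos _ _ (by positivity)).ne'
    have hbT : b ≠ ⊤ := measure_ball_lt_top.ne
    -- measurability
    have m1 : Measurable (Function.uncurry fun (x w : E) =>
        (‖u (x + h) - u (x + w)‖₊ : ℝ≥0∞) ^ q / D) :=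
      (meas_num hu (measurable_fst.add_const h) (measurable_fst.add measurable_snd) q).div
        measurable_const
    have m2 : Measurable (Function.uncurry fun (x w : E) =>
        (‖u (x + w) - u x‖₊ : ℝ≥0∞) ^ q / D) :=
      (meas_num hu (measurable_fst.add measurable_snd) measurable_fst q).div measurable_const
    -- bound on the double ball integral from the hypothesis
    have hball : (∫⁻ x, ∫⁻ w in ball (0:E) ε,
          (‖u x - u (x + w)‖₊ : ℝ≥0∞) ^ q / (‖w‖₊ : ℝ≥0∞) ^ (r * q))
        ≤ ENNReal.ofReal (ε^N) * C := by
      have h1 := hb ε ⟨hε0, hbig⟩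
      simp only [inner_eq (u := u) q (r * q)] at h1
      set c : ℝ≥0∞ := ENNReal.ofReal (ε ^ N) with hc
      have hc0 : c ≠ 0 := by
        simp only [hc, ne_eq, ENNReal.ofReal_eq_zero, not_le]
        positivity
      have hcT : c ≠ ⊤ := ENNReal.ofReal_ne_top
      rw [lintegral_const_mul' _ _ (ENNReal.inv_ne_top.mpr hc0)] at h1
      calc (∫⁻ x, ∫⁻ w in ball (0:E) ε,
              (‖u x - u (x + w)‖₊ : ℝ≥0∞) ^ q / (‖w‖₊ : ℝ≥0∞) ^ (r * q))
          = c * (c⁻¹ * ∫⁻ x, ∫⁻ w in ball (0:E) ε,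
              (‖u x - u (x + w)‖₊ : ℝ≥0∞) ^ q / (‖w‖₊ : ℝ≥0∞) ^ (r * q)) := by
            rw [← mul_assoc, ENNReal.mul_inv_cancel hc0 hcT, one_mul]
        _ ≤ c * C := mul_le_mul_right h1 _
    -- second term bound
    have hSII : (∫⁻ x, ∫⁻ w in S, (‖u (x + w) - u x‖₊ : ℝ≥0∞) ^ q / D)
        ≤ ENNReal.ofReal (ε^N) * C := by
      refine le_trans ?_ hball
      apply lintegral_mono; intro x
      refine le_trans (setLIntegral_mono' measurableSet_ball fun w hw => ?_)
        (lintegral_mono_set hS_sub)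
      rw [show (‖u (x + w) - u x‖₊ : NNReal) = ‖u x - u (x + w)‖₊ by rw [← neg_sub, nnnorm_neg]]
      refine ENNReal.div_le_div_left ?_ _
      apply ENNReal.rpow_le_rpow _ hrq.le
      rw [ENNReal.coe_le_coe, ← NNReal.coe_le_coe]
      simpa using hS_norm w hw
    -- swap for the second term
    have hswapQ : (∫⁻ x, ∫⁻ w in S, (‖u (x + w) - u x‖₊ : ℝ≥0∞) ^ q / D)
        = ∫⁻ w in S, ∫⁻ x, (‖u (x + w) - u x‖₊ : ℝ≥0∞) ^ q / D :=
      lintegral_lintegral_swap m2.aemeasurable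
    -- first term equals second term
    have hSI : (∫⁻ x, ∫⁻ w in S, (‖u (x + h) - u (x + w)‖₊ : ℝ≥0∞) ^ q / D)
        = ∫⁻ x, ∫⁻ w in S, (‖u (x + w) - u x‖₊ : ℝ≥0∞) ^ q / D := by
      rw [lintegral_lintegral_swap m1.aemeasurable, hswapQ]
      have step1 : ∀ w : E, (∫⁻ x, (‖u (x + h) - u (x + w)‖₊ : ℝ≥0∞) ^ q / D)
          = ∫⁻ x, (‖u (x + (h - w)) - u x‖₊ : ℝ≥0∞) ^ q / D := by
        intro w
        have hshift := lintegral_add_right_eq_self (μ := volume)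
          (fun x => (‖u (x + (h - w)) - u x‖₊ : ℝ≥0∞) ^ q / D) w
        refine Eq.trans ?_ hshift
        apply lintegral_congr; intro x
        have hx : x + w + (h - w) = x + h := by abel
        rw [hx]
      calc (∫⁻ w in S, ∫⁻ x, (‖u (x + h) - u (x + w)‖₊ : ℝ≥0∞) ^ q / D)
          = ∫⁻ w in S, (fun v => ∫⁻ x, (‖u (x + v) - u x‖₊ : ℝ≥0∞) ^ q / D) (h - w) :=
            lintegral_congr fun w => step1 w
        _ = ∫⁻ v in S, ∫⁻ x, (‖u (x + v) - u x‖₊ : ℝ≥0∞) ^ q / D :=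
            reflect_ball h hS_refl (fun v => ∫⁻ x, (‖u (x + v) - u x‖₊ : ℝ≥0∞) ^ q / D)
    -- put it together
    set I := ∫⁻ x, (‖u (x + h) - u x‖₊ : ℝ≥0∞) ^ q / D with hIdef
    have hIb : I * b = ∫⁻ x, ∫⁻ w in S, (‖u (x + h) - u x‖₊ : ℝ≥0∞) ^ q / D := by
      rw [← lintegral_mul_const' b _ hbT]
      apply lintegral_congr; intro x
      rw [setLIntegral_const]
    have hkey : I * b ≤ 2^(q+1) * (ENNReal.ofReal (ε^N) * C) := by
      rw [hIb]
      have hpt : (∫⁻ x, ∫⁻ w in S, (‖u (x + h) - u x‖₊ : ℝ≥0∞) ^ q / D)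
          ≤ ∫⁻ x, ∫⁻ w in S, 2^q * ((‖u (x + h) - u (x + w)‖₊ : ℝ≥0∞) ^ q / D
              + (‖u (x + w) - u x‖₊ : ℝ≥0∞) ^ q / D) := by
        apply lintegral_mono; intro x
        apply setLIntegral_mono' measurableSet_ball; intro w _
        calc (‖u (x + h) - u x‖₊ : ℝ≥0∞) ^ q / D
            ≤ ((‖u (x + h) - u (x + w)‖₊ : ℝ≥0∞) + (‖u (x + w) - u x‖₊ : ℝ≥0∞)) ^ q / D :=
              ENNReal.div_le_div_right
                (ENNReal.rpow_le_rpow (htri _ (u (x + w)) _) hq0.le) _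
          _ ≤ (2^q * ((‖u (x + h) - u (x + w)‖₊ : ℝ≥0∞) ^ q
                + (‖u (x + w) - u x‖₊ : ℝ≥0∞) ^ q)) / D :=
              ENNReal.div_le_div_right (rpow_add_le _ _ hq0.le) _
          _ = 2^q * ((‖u (x + h) - u (x + w)‖₊ : ℝ≥0∞) ^ q / D
                + (‖u (x + w) - u x‖₊ : ℝ≥0∞) ^ q / D) := by
              rw [mul_div_assoc, ENNReal.add_div]
      refine le_trans hpt ?_
      have hsplit : (∫⁻ x, ∫⁻ w in S, 2^q * ((‖u (x + h) - u (x + w)‖₊ : ℝ≥0∞) ^ q / D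
              + (‖u (x + w) - u x‖₊ : ℝ≥0∞) ^ q / D))
          = 2^q * ((∫⁻ x, ∫⁻ w in S, (‖u (x + h) - u (x + w)‖₊ : ℝ≥0∞) ^ q / D)
              + ∫⁻ x, ∫⁻ w in S, (‖u (x + w) - u x‖₊ : ℝ≥0∞) ^ q / D) := by
        have hinner : ∀ x : E, (∫⁻ w in S, 2^q * ((‖u (x + h) - u (x + w)‖₊ : ℝ≥0∞) ^ q / D
              + (‖u (x + w) - u x‖₊ : ℝ≥0∞) ^ q / D))
            = 2^q * ((∫⁻ w in S, (‖u (x + h) - u (x + w)‖₊ : ℝ≥0∞) ^ q / D)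
              + ∫⁻ w in S, (‖u (x + w) - u x‖₊ : ℝ≥0∞) ^ q / D) := by
          intro x
          have m1x : Measurable fun w : E => (‖u (x + h) - u (x + w)‖₊ : ℝ≥0∞) ^ q / D :=
            ((ENNReal.continuous_rpow_const.measurable).comp
              ((measurable_const.sub (hu.comp (measurable_const_add x))).nnnorm.coe_nnreal_ennreal)).div
              measurable_const
          rw [lintegral_const_mul' _ _ h2qT, lintegral_add_left m1x]
        have mo : Measurable fun x : E =>
            ∫⁻ w in S, (‖u (x + h) - u (x + w)‖₊ : ℝ≥0∞) ^ q / D :=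
          m1.lintegral_prod_right
        calc (∫⁻ x, ∫⁻ w in S, 2^q * ((‖u (x + h) - u (x + w)‖₊ : ℝ≥0∞) ^ q / D
                + (‖u (x + w) - u x‖₊ : ℝ≥0∞) ^ q / D))
            = ∫⁻ x, 2^q * ((∫⁻ w in S, (‖u (x + h) - u (x + w)‖₊ : ℝ≥0∞) ^ q / D)
                + ∫⁻ w in S, (‖u (x + w) - u x‖₊ : ℝ≥0∞) ^ q / D) := lintegral_congr hinner
          _ = 2^q * ∫⁻ x, ((∫⁻ w in S, (‖u (x + h) - u (x + w)‖₊ : ℝ≥0∞) ^ q / D)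
                + ∫⁻ w in S, (‖u (x + w) - u x‖₊ : ℝ≥0∞) ^ q / D) :=
              lintegral_const_mul' _ _ h2qT
          _ = 2^q * ((∫⁻ x, ∫⁻ w in S, (‖u (x + h) - u (x + w)‖₊ : ℝ≥0∞) ^ q / D)
              + ∫⁻ x, ∫⁻ w in S, (‖u (x + w) - u x‖₊ : ℝ≥0∞) ^ q / D) := by
              rw [lintegral_add_left mo]
      rw [hsplit, hSI]
      calc 2^q * ((∫⁻ x, ∫⁻ w in S, (‖u (x + w) - u x‖₊ : ℝ≥0∞) ^ q / D)
              + ∫⁻ x, ∫⁻ w in S, (‖u (x + w) - u x‖₊ : ℝ≥0∞) ^ q / D)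
          ≤ 2^q * (ENNReal.ofReal (ε^N) * C + ENNReal.ofReal (ε^N) * C) :=
            mul_le_mul_right (add_le_add hSII hSII) _
        _ = 2^(q+1) * (ENNReal.ofReal (ε^N) * C) := by
            rw [ENNReal.rpow_add q 1 two_ne_zero ENNReal.ofNat_ne_top, ENNReal.rpow_one]; ring
    -- final arithmetic
    have hcancel : ENNReal.ofReal (ε^N) * (ENNReal.ofReal ((ε/4)^N))⁻¹
        = ENNReal.ofReal ((4:ℝ)^N) := by
      have he : (ε:ℝ)^N = (ε/4)^N * 4^N := by
        rw [div_pow, div_mul_cancel₀]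
        positivity
      have h40 : ENNReal.ofReal ((ε/4)^N) ≠ 0 := by
        simp only [ne_eq, ENNReal.ofReal_eq_zero, not_le]
        positivity
      rw [he, ENNReal.ofReal_mul (by positivity)]
      rw [mul_comm (ENNReal.ofReal ((ε/4)^N)) _, mul_assoc,
        ENNReal.mul_inv_cancel h40 ENNReal.ofReal_ne_top, mul_one]
    have hIle : I ≤ 2^(q+1) * (ENNReal.ofReal (ε^N) * C) * b⁻¹ := by
      have : I = (I * b) * b⁻¹ := by
        rw [mul_assoc, ENNReal.mul_inv_cancel hb0 hbT, mul_one]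
      rw [this]
      exact mul_le_mul_left hkey _
    refine le_trans hIle (le_trans (le_of_eq ?_) le_add_self)
    rw [hbv, ENNReal.mul_inv
      (Or.inl (by simp only [ne_eq, ENNReal.ofReal_eq_zero, not_le]; positivity))
      (Or.inl ENNReal.ofReal_ne_top)]
    calc 2^(q+1) * (ENNReal.ofReal (ε^N) * C) * ((ENNReal.ofReal ((ε/4)^N))⁻¹ * B⁻¹)
        = (ENNReal.ofReal (ε^N) * (ENNReal.ofReal ((ε/4)^N))⁻¹) * (2^(q+1) * B⁻¹ * C) := by
          ring
      _ = 2^(q+1) * ENNReal.ofReal ((4:ℝ)^N) * B⁻¹ * C := by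
          rw [hcancel]; ring

end Stmt8Aux

open Stmt8Aux

/-- For `r ∈ (0,1)`, `q ∈ [1,∞)`:
`u ∈ B^r_{q,∞}(ℝ^N,ℝ^d)` (i.e. `u ∈ L^q` with
`sup_{h≠0} ∫ ‖u(x+h)-u(x)‖^q/‖h‖^{rq} dx < ∞`) if and only if `u ∈ L^q` and
`sup_{ε∈(0,1)} ∫ ε^{-N} ∫_{B_ε(x)} ‖u(x)-u(y)‖^q/‖x-y‖^{rq} dy dx < ∞`. -/
theorem stmt_8 (N d : ℕ) (q r : ℝ) (hq : 1 ≤ q) (hr : r ∈ Set.Ioo (0:ℝ) 1)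
    (u : EuclideanSpace ℝ (Fin N) → EuclideanSpace ℝ (Fin d)) :
    (MemLp u (ENNReal.ofReal q) volume ∧
      ∃ C : ℝ≥0∞, C ≠ ⊤ ∧ ∀ h : EuclideanSpace ℝ (Fin N), h ≠ 0 →
        (∫⁻ x, (‖u (x + h) - u x‖₊ : ℝ≥0∞) ^ q / (‖h‖₊ : ℝ≥0∞) ^ (r * q)) ≤ C) ↔
    (MemLp u (ENNReal.ofReal q) volume ∧
      ∃ C : ℝ≥0∞, C ≠ ⊤ ∧ ∀ ε ∈ Set.Ioo (0:ℝ) 1,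
        (∫⁻ x, (ENNReal.ofReal (ε ^ N))⁻¹ *
          ∫⁻ y in Metric.ball x ε,
            (‖u x - u y‖₊ : ℝ≥0∞) ^ q / (‖x - y‖₊ : ℝ≥0∞) ^ (r * q)) ≤ C) := by
  have hq0 : (0:ℝ) < q := lt_of_lt_of_le one_pos hq
  have hrq : (0:ℝ) < r * q := mul_pos hr.1 hq0
  rcases Nat.eq_zero_or_pos N with hN | hN
  · -- trivial case `N = 0`
    subst hN
    haveI : Subsingleton (EuclideanSpace ℝ (Fin 0)) :=
      ⟨fun a b => by ext i; exact i.elim0⟩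
    constructor
    · rintro ⟨h1, _C, _hC, _hb⟩
      refine ⟨h1, 1, ENNReal.one_ne_top, fun ε _ => ?_⟩
      have hzero : ∀ x : EuclideanSpace ℝ (Fin 0),
          (∫⁻ y in Metric.ball x ε,
            (‖u x - u y‖₊ : ℝ≥0∞) ^ q / (‖x - y‖₊ : ℝ≥0∞) ^ (r * q)) = 0 := by
        intro x
        have : ∀ y : EuclideanSpace ℝ (Fin 0),
            (‖u x - u y‖₊ : ℝ≥0∞) ^ q / (‖x - y‖₊ : ℝ≥0∞) ^ (r * q) = 0 := by
          intro y
          rw [Subsingleton.elim y x]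
          simp [ENNReal.zero_rpow_of_pos hq0, ENNReal.zero_rpow_of_pos hrq]
        simp only [this, lintegral_zero]
      simp only [hzero, mul_zero, lintegral_zero]
      exact zero_le
    · rintro ⟨h1, _C, _hC, _hb⟩
      refine ⟨h1, 1, ENNReal.one_ne_top, fun h hh => ?_⟩
      exact absurd (Subsingleton.elim h 0) hh
  · constructor
    · rintro ⟨h1, C, hC, hb⟩
      obtain ⟨v, hv, huv⟩ : ∃ v, Measurable v ∧ u =ᵐ[volume] v :=
        ⟨h1.aestronglyMeasurable.mk u,
          h1.aestronglyMeasurable.stronglyMeasurable_mk.measurable,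
          h1.aestronglyMeasurable.ae_eq_mk⟩
      refine ⟨h1, C * volume (ball (0 : EuclideanSpace ℝ (Fin N)) 1),
        ENNReal.mul_ne_top hC measure_ball_lt_top.ne, fun ε hε => ?_⟩
      have hEe : (∫⁻ x, (ENNReal.ofReal (ε ^ N))⁻¹ *
            ∫⁻ y in Metric.ball x ε,
              (‖u x - u y‖₊ : ℝ≥0∞) ^ q / (‖x - y‖₊ : ℝ≥0∞) ^ (r * q))
          = ∫⁻ x, (ENNReal.ofReal (ε ^ N))⁻¹ *
            ∫⁻ y in Metric.ball x ε,
              (‖v x - v y‖₊ : ℝ≥0∞) ^ q / (‖x - y‖₊ : ℝ≥0∞) ^ (r * q) := by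
        apply lintegral_congr_ae
        filter_upwards [huv] with x hx
        congr 1
        apply lintegral_congr_ae
        filter_upwards [ae_restrict_of_ae huv] with y hy
        rw [hx, hy]
      rw [hEe]
      have hb' : ∀ h : EuclideanSpace ℝ (Fin N), h ≠ 0 →
          (∫⁻ x, (‖v (x + h) - v x‖₊ : ℝ≥0∞) ^ q / (‖h‖₊ : ℝ≥0∞) ^ (r * q)) ≤ C := by
        intro h hh
        refine le_trans (le_of_eq (lintegral_congr_ae ?_)) (hb h hh)
        have hcomp : (fun x => u (x + h)) =ᵐ[volume] fun x => v (x + h) :=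
          MeasureTheory.ae_eq_comp (measurable_add_const h).aemeasurable
            (by rwa [map_add_right_eq_self])
        filter_upwards [huv, hcomp] with x hx hxh
        rw [← hx, ← hxh]
      exact fwd_aux hN hq hr.1 hv C hb' hε.1
    · rintro ⟨h1, C, hC, hb⟩
      obtain ⟨v, hv, huv⟩ : ∃ v, Measurable v ∧ u =ᵐ[volume] v :=
        ⟨h1.aestronglyMeasurable.mk u,
          h1.aestronglyMeasurable.stronglyMeasurable_mk.measurable,
          h1.aestronglyMeasurable.ae_eq_mk⟩
      refine ⟨h1, ?_⟩
      have hb' : ∀ ε ∈ Set.Ioo (0:ℝ) 1,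
          (∫⁻ x, (ENNReal.ofReal (ε ^ N))⁻¹ *
            ∫⁻ y in Metric.ball x ε,
              (‖v x - v y‖₊ : ℝ≥0∞) ^ q / (‖x - y‖₊ : ℝ≥0∞) ^ (r * q)) ≤ C := by
        intro ε hε
        refine le_trans (le_of_eq ?_) (hb ε hε)
        apply lintegral_congr_ae
        filter_upwards [huv] with x hx
        congr 1
        apply lintegral_congr_ae
        filter_upwards [ae_restrict_of_ae huv] with y hy
        rw [hx, hy]
      have hA : (∫⁻ x, (‖v x‖₊ : ℝ≥0∞) ^ q) ≠ ⊤ := by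
        have h1v : MemLp v (ENNReal.ofReal q) volume := h1.ae_eq huv
        have hp0 : (ENNReal.ofReal q) ≠ 0 := by
          simp only [ne_eq, ENNReal.ofReal_eq_zero, not_le]
          exact hq0
        have := lintegral_rpow_enorm_lt_top_of_eLpNorm_lt_top hp0 ENNReal.ofReal_ne_top
          h1v.eLpNorm_lt_top
        rw [ENNReal.toReal_ofReal hq0.le] at this
        exact this.ne
      obtain ⟨C', hC', hI⟩ := bwd_aux hN hq hr.1 hv hA C hC hb'
      refine ⟨C', hC', fun h hh => ?_⟩
      refine le_trans (le_of_eq ?_) (hI h hh)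
      apply lintegral_congr_ae
      have hcomp : (fun x => u (x + h)) =ᵐ[volume] fun x => v (x + h) :=
        MeasureTheory.ae_eq_comp (measurable_add_const h).aemeasurable
          (by rwa [map_add_right_eq_self])
      filter_upwards [huv, hcomp] with x hx hxh
      rw [hx, hxh]
end
end

section
/- Let $q\in[1,\infty)$, $r\in(0,1)$, $u\in B^r_{q,\infty}(\mathbb{R}^N,\mathbb{R}^d)$, and let $\{\rho_\varepsilon\}$ be any kernel. Then $\limsup_{\varepsilon\to 0^+}\int_{\mathbb{R}^N}\int_{\mathbb{R}^N}\rho_\varepsilon(|x-y|)\frac{|u(x)-u(y)|^q}{|x-y|^{rq}}dy\,dx \le [u]^q_{B^r_{q,\infty}(\mathbb{R}^N,\mathbb{R}^d)}<\infty$. -/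
open MeasureTheory Filter
open scoped ENNReal Topology

noncomputable section

/-- A kernel on `(0,a)` (nonnegative, measurable, normalized, with the decreasing
support property). -/
def IsKernel (N : ℕ) (a : ℝ) (ρ : ℝ → ℝ → ℝ) : Prop :=
  (∀ ε ∈ Set.Ioo (0:ℝ) a,
      (∀ t : ℝ, 0 ≤ ρ ε t) ∧ Measurable (ρ ε) ∧
      (∫ z : EuclideanSpace ℝ (Fin N), ρ ε ‖z‖) = 1) ∧
  ∀ δ : ℝ, 0 < δ →
    Filter.Tendsto (fun ε : ℝ => ∫ t in Set.Ioi δ, ρ ε t * t ^ ((N : ℝ) - 1))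
      (𝓝[Set.Ioo (0:ℝ) a] 0) (𝓝 0)

/-- For `q ∈ [1,∞)`, `r ∈ (0,1)`, `u ∈ B^r_{q,∞}(ℝ^N,ℝ^d)`
(with the Besov family bounded by a finite `B`, whose least value is
`[u]^q_{B^r_{q,∞}}`), and any kernel `ρ_ε`:
`limsup_{ε→0⁺} ∫∫ ρ_ε(|x-y|) ‖u(x)-u(y)‖^q/|x-y|^{rq} dy dx ≤ B < ∞`. -/
theorem stmt_14 (N d : ℕ) (hN : 0 < N) (q r a : ℝ) (hq : 1 ≤ q)
    (hr : r ∈ Set.Ioo (0:ℝ) 1) (ha : 0 < a)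
    (u : EuclideanSpace ℝ (Fin N) → EuclideanSpace ℝ (Fin d))
    (hu : MemLp u (ENNReal.ofReal q) volume)
    (B : ℝ≥0∞) (hBfin : B ≠ ⊤)
    (hB : ∀ h : EuclideanSpace ℝ (Fin N), h ≠ 0 →
      (∫⁻ x, (‖u (x + h) - u x‖₊ : ℝ≥0∞) ^ q / (‖h‖₊ : ℝ≥0∞) ^ (r * q)) ≤ B)
    (ρ : ℝ → ℝ → ℝ) (hρ : IsKernel N a ρ) :
    Filter.limsup
      (fun ε : ℝ => ∫⁻ x, ∫⁻ y,
        ENNReal.ofReal (ρ ε ‖x - y‖) * (‖u x - u y‖₊ : ℝ≥0∞) ^ q /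
          (‖x - y‖₊ : ℝ≥0∞) ^ (r * q))
      (𝓝[Set.Ioo (0:ℝ) a] 0) ≤ B := by
  obtain ⟨hker, -⟩ := hρ
  obtain ⟨g, hg, hug⟩ := hu.1
  have hgm : Measurable g := hg.measurable
  refine Filter.limsup_le_of_le (by isBoundedDefault) ?_
  filter_upwards [self_mem_nhdsWithin] with ε hε
  obtain ⟨hρ0, hρm, hρ1⟩ := hker ε hε
  -- replace u by its measurable version g
  have key : (∫⁻ x, ∫⁻ y, ENNReal.ofReal (ρ ε ‖x - y‖) * (‖u x - u y‖₊ : ℝ≥0∞) ^ q /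
          (‖x - y‖₊ : ℝ≥0∞) ^ (r * q))
      = ∫⁻ x, ∫⁻ y, ENNReal.ofReal (ρ ε ‖x - y‖) * (‖g x - g y‖₊ : ℝ≥0∞) ^ q /
          (‖x - y‖₊ : ℝ≥0∞) ^ (r * q) := by
    refine lintegral_congr_ae ?_
    filter_upwards [hug] with x hx
    refine lintegral_congr_ae ?_
    filter_upwards [hug] with y hy
    rw [hx, hy]
  rw [key]
  -- translate inner integral
  have key2 : ∀ x : EuclideanSpace ℝ (Fin N),
      (∫⁻ y, ENNReal.ofReal (ρ ε ‖x - y‖) * (‖g x - g y‖₊ : ℝ≥0∞) ^ q /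
          (‖x - y‖₊ : ℝ≥0∞) ^ (r * q))
      = ∫⁻ h, ENNReal.ofReal (ρ ε ‖h‖) * (‖g (x + h) - g x‖₊ : ℝ≥0∞) ^ q /
          (‖h‖₊ : ℝ≥0∞) ^ (r * q) := by
    intro x
    rw [← lintegral_add_left_eq_self (fun y => ENNReal.ofReal (ρ ε ‖x - y‖) *
        (‖g x - g y‖₊ : ℝ≥0∞) ^ q / (‖x - y‖₊ : ℝ≥0∞) ^ (r * q)) x]
    refine lintegral_congr fun h => ?_
    have h1 : x - (x + h) = -h := by abel
    have h2 : ‖g x - g (x + h)‖₊ = ‖g (x + h) - g x‖₊ := by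
      rw [← neg_sub, nnnorm_neg]
    rw [h1, norm_neg, nnnorm_neg, h2]
  simp_rw [key2]
  -- swap integrals
  have hmeas : AEMeasurable (fun p : EuclideanSpace ℝ (Fin N) × EuclideanSpace ℝ (Fin N) =>
      ENNReal.ofReal (ρ ε ‖p.2‖) * (‖g (p.1 + p.2) - g p.1‖₊ : ℝ≥0∞) ^ q /
        (‖p.2‖₊ : ℝ≥0∞) ^ (r * q)) (volume.prod volume) := by
    apply Measurable.aemeasurable
    apply Measurable.div
    · apply Measurable.mul
      · exact (ENNReal.measurable_ofReal.comp (hρm.comp (measurable_norm.comp measurable_snd)))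
      · exact (measurable_coe_nnreal_ennreal.comp
          ((hgm.comp (measurable_fst.add measurable_snd)).sub
            (hgm.comp measurable_fst)).nnnorm).pow_const _
    · exact (measurable_coe_nnreal_ennreal.comp (measurable_snd.nnnorm)).pow_const _
  rw [lintegral_lintegral_swap hmeas]
  -- bound inner integral by ρ * B
  have hbound : ∀ᵐ h : EuclideanSpace ℝ (Fin N), (∫⁻ x, ENNReal.ofReal (ρ ε ‖h‖) *
      (‖g (x + h) - g x‖₊ : ℝ≥0∞) ^ q / (‖h‖₊ : ℝ≥0∞) ^ (r * q))
      ≤ ENNReal.ofReal (ρ ε ‖h‖) * B := by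
    haveI : Nonempty (Fin N) := ⟨⟨0, hN⟩⟩
    have hzero : (volume : Measure (EuclideanSpace ℝ (Fin N))) {0} = 0 :=
      measure_singleton 0
    filter_upwards [measure_eq_zero_iff_ae_notMem.mp hzero] with h hh
    have hne : h ≠ 0 := fun e => hh (by simp [e])
    have heq : (∫⁻ x, (‖g (x + h) - g x‖₊ : ℝ≥0∞) ^ q / (‖h‖₊ : ℝ≥0∞) ^ (r * q))
        = ∫⁻ x, (‖u (x + h) - u x‖₊ : ℝ≥0∞) ^ q / (‖h‖₊ : ℝ≥0∞) ^ (r * q) := by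
      refine lintegral_congr_ae ?_
      have hqmp := (measurePreserving_add_right (volume :
        Measure (EuclideanSpace ℝ (Fin N))) h).quasiMeasurePreserving
      filter_upwards [hug, hqmp.ae_eq_comp hug.symm] with x hx hx2
      simp only [Function.comp_apply] at hx2
      rw [hx2, ← hx]
    calc (∫⁻ x, ENNReal.ofReal (ρ ε ‖h‖) *
        (‖g (x + h) - g x‖₊ : ℝ≥0∞) ^ q / (‖h‖₊ : ℝ≥0∞) ^ (r * q))
        = ENNReal.ofReal (ρ ε ‖h‖) *
          ∫⁻ x, (‖g (x + h) - g x‖₊ : ℝ≥0∞) ^ q / (‖h‖₊ : ℝ≥0∞) ^ (r * q) := by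
          simp_rw [mul_div_assoc]
          rw [lintegral_const_mul' _ _ ENNReal.ofReal_ne_top]
      _ ≤ ENNReal.ofReal (ρ ε ‖h‖) * B := by
          rw [heq]
          exact mul_le_mul_right (hB h hne) _
  refine le_trans (lintegral_mono_ae hbound) ?_
  -- compute ∫ ρ = 1
  have hint : Integrable (fun z : EuclideanSpace ℝ (Fin N) => ρ ε ‖z‖) volume :=
    integrable_of_integral_eq_one hρ1
  have h1 : (∫⁻ z : EuclideanSpace ℝ (Fin N), ENNReal.ofReal (ρ ε ‖z‖)) = 1 := by
    rw [← ofReal_integral_eq_lintegral_ofReal hint (Eventually.of_forall fun z => hρ0 _),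
      hρ1, ENNReal.ofReal_one]
  rw [lintegral_mul_const' B _ hBfin, h1, one_mul]
end
end
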